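/- Let N ≥ 2, let E be the N-dimensional Euclidean space (EuclideanSpace ℝ (Fin N)), let x ∈ E with x ≠ 0 and r := ‖x‖, and let η : ℝ → ℝ have derivative η′ at r (HasDerivAt η η′ r). Define u : E → E by u(z) := (η(‖z‖)/‖z‖) · z for z ≠ 0 (with an arbitrary value at 0). Then u is Fréchet differentiable at x with derivative the continuous linear map L given by L(v) = (η(r)/r) · v + ((r·η′ − η(r))/r³) · ⟨x, v⟩ · x for all v ∈ E, and the determinant of L (as a linear endomorphism of E) equals (η(r)/r)^{N−1} · η′. (These are the ν = 2 cases of the derivative formula for radial maps in Proposition A.1 and of the Jacobian formula det Du(x) = (η(|x|)/|x|)^{N−1} η′(|x|) in Corollary A.1.) -/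

import Mathlib

open Set

noncomputable section

/-- Derivative and Jacobian determinant of a radial map `u(z) = (η(‖z‖)/‖z‖) • z`
at a point `x ≠ 0`: the derivative is
`v ↦ (η(r)/r) • v + ((r η' − η(r))/r³) ⟨x, v⟩ • x` with `r = ‖x‖`, and its
determinant equals `(η(r)/r)^(N−1) · η'`. -/
theorem radial_map_hasFDerivAt_and_det {N : ℕ} (hN : 2 ≤ N)
    (x : EuclideanSpace ℝ (Fin N)) (hx : x ≠ 0)
    (η : ℝ → ℝ) (η' : ℝ) (hη : HasDerivAt η η' ‖x‖) :
    ∃ L : EuclideanSpace ℝ (Fin N) →L[ℝ] EuclideanSpace ℝ (Fin N),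
      (∀ v : EuclideanSpace ℝ (Fin N),
        L v = (η ‖x‖ / ‖x‖) • v +
          (((‖x‖ * η' - η ‖x‖) / ‖x‖ ^ 3) * (inner ℝ x v : ℝ)) • x) ∧
      HasFDerivAt (fun z : EuclideanSpace ℝ (Fin N) => (η ‖z‖ / ‖z‖) • z) L x ∧
      LinearMap.det (L : EuclideanSpace ℝ (Fin N) →ₗ[ℝ] EuclideanSpace ℝ (Fin N)) =
        (η ‖x‖ / ‖x‖) ^ (N - 1) * η' := by
  classical
  have hr0 : (0:ℝ) < ‖x‖ := norm_pos_iff.mpr hx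
  have hrne : ‖x‖ ≠ 0 := hr0.ne'
  set i0 : Fin N := ⟨0, by omega⟩ with hi0
  set L : EuclideanSpace ℝ (Fin N) →L[ℝ] EuclideanSpace ℝ (Fin N) :=
    (η ‖x‖ / ‖x‖) • ContinuousLinearMap.id ℝ _ +
      ContinuousLinearMap.smulRight
        (((‖x‖ * η' - η ‖x‖) / ‖x‖ ^ 3) • innerSL ℝ x) x with hL
  have hLapp : ∀ v : EuclideanSpace ℝ (Fin N),
      L v = (η ‖x‖ / ‖x‖) • v +
        (((‖x‖ * η' - η ‖x‖) / ‖x‖ ^ 3) * (inner ℝ x v : ℝ)) • x := by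
    intro v
    simp [hL, ContinuousLinearMap.smulRight_apply]
  refine ⟨L, hLapp, ?_, ?_⟩
  · -- differentiability
    have hsq : HasFDerivAt (fun z : EuclideanSpace ℝ (Fin N) => ‖z‖^2)
        (2 • innerSL ℝ x) x := (hasStrictFDerivAt_norm_sq x).hasFDerivAt
    have hsqrt : HasDerivAt Real.sqrt (1/(2*‖x‖)) (‖x‖^2) := by
      have h := Real.hasDerivAt_sqrt (x := ‖x‖^2) (by positivity)
      rwa [Real.sqrt_sq hr0.le] at h
    have hnorm : HasFDerivAt (fun z : EuclideanSpace ℝ (Fin N) => ‖z‖)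
        ((1/(2*‖x‖)) • (2 • innerSL ℝ x)) x := by
      have h := hsqrt.comp_hasFDerivAt x hsq
      have heq : (Real.sqrt ∘ fun z : EuclideanSpace ℝ (Fin N) => ‖z‖^2)
          = fun z : EuclideanSpace ℝ (Fin N) => ‖z‖ := by
        funext z; simp [Function.comp, Real.sqrt_sq (norm_nonneg z)]
      rwa [heq] at h
    have hg : HasDerivAt (fun t : ℝ => η t / t)
        ((η' * ‖x‖ - η ‖x‖ * 1) / ‖x‖ ^ 2) ‖x‖ :=
      hη.div (hasDerivAt_id ‖x‖) hrne
    have hf : HasFDerivAt (fun z : EuclideanSpace ℝ (Fin N) => η ‖z‖ / ‖z‖)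
        (((η' * ‖x‖ - η ‖x‖ * 1) / ‖x‖ ^ 2) • ((1/(2*‖x‖)) • (2 • innerSL ℝ x))) x :=
      hg.comp_hasFDerivAt x hnorm
    have hu := hf.smul (hasFDerivAt_id x)
    have hL0 : L = (η ‖x‖ / ‖x‖) • ContinuousLinearMap.id ℝ (EuclideanSpace ℝ (Fin N)) +
        ContinuousLinearMap.smulRight
          (((η' * ‖x‖ - η ‖x‖ * 1) / ‖x‖ ^ 2) • ((1/(2*‖x‖)) • (2 • innerSL ℝ x))) x := by
      rw [hL]
      refine ContinuousLinearMap.ext fun v => ?_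
      simp only [ContinuousLinearMap.add_apply, ContinuousLinearMap.coe_id', id_eq,
        ContinuousLinearMap.smulRight_apply, ContinuousLinearMap.smul_apply,
        innerSL_apply_apply, smul_eq_mul, nsmul_eq_mul, Nat.cast_ofNat]
      congr 1
      field_simp
    rw [hL0]
    exact hu
  · -- determinant
    have hv : Orthonormal ℝ
        (Set.restrict {i0} (fun _ : Fin N => ‖x‖⁻¹ • x)) := by
      constructor
      · intro i
        show ‖‖x‖⁻¹ • x‖ = 1
        rw [norm_smul, norm_inv, norm_norm, inv_mul_cancel₀ hrne]
      · intro i j hij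
        exact absurd (Subtype.ext ((i.2 : i.1 = i0).trans (j.2 : j.1 = i0).symm)) hij
    obtain ⟨b, hb⟩ := hv.exists_orthonormalBasis_extension_of_card_eq
      (by simp [finrank_euclideanSpace])
    have hb0 : b i0 = ‖x‖⁻¹ • x := hb i0 rfl
    have hxb : x = ‖x‖ • b i0 := by
      rw [hb0, smul_smul, mul_inv_cancel₀ hrne, one_smul]
    have hib : ∀ i j : Fin N, (inner ℝ (b i) (b j) : ℝ) = if i = j then 1 else 0 :=
      fun i j => orthonormal_iff_ite.mp b.orthonormal i j
    have h1 : ∀ j : Fin N, (inner ℝ x (b j) : ℝ) = ‖x‖ * (if i0 = j then 1 else 0) := by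
      intro j
      conv_lhs => rw [hxb]
      rw [real_inner_smul_left, hib]
    have h2 : ∀ i : Fin N, (inner ℝ (b i) x : ℝ) = ‖x‖ * (if i = i0 then 1 else 0) := by
      intro i
      conv_lhs => rw [hxb]
      rw [real_inner_smul_right, hib]
    have hmat : LinearMap.toMatrix b.toBasis b.toBasis
        (L : EuclideanSpace ℝ (Fin N) →ₗ[ℝ] EuclideanSpace ℝ (Fin N)) =
        Matrix.diagonal (fun i => if i = i0 then η' else η ‖x‖ / ‖x‖) := by
      ext i j
      rw [LinearMap.toMatrix_apply, OrthonormalBasis.coe_toBasis]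
      have hrepr : b.toBasis.repr (L (b j)) i = (inner ℝ (b i) (L (b j)) : ℝ) := by
        rw [← b.repr_apply_apply]; rfl
      rw [ContinuousLinearMap.coe_coe, hrepr, hLapp (b j)]
      rw [inner_add_right, real_inner_smul_right, real_inner_smul_right,
        hib i j, h1 j, h2 i, Matrix.diagonal_apply]
      by_cases hij : i = j
      · subst hij
        by_cases hi : i = i0
        · subst hi
          simp only [if_pos rfl, if_true]
          field_simp
          ring
        · simp [if_neg hi, if_neg (Ne.symm hi)]
      · simp only [if_neg hij]
        by_cases hj : i0 = j
        · have hi : i ≠ i0 := fun h => hij (h.trans hj)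
          simp [if_pos hj, if_neg hi]
        · simp [if_neg hj]
    rw [← LinearMap.det_toMatrix b.toBasis, hmat, Matrix.det_diagonal]
    rw [← Finset.mul_prod_erase _ _ (Finset.mem_univ i0), if_pos rfl]
    rw [Finset.prod_congr rfl (fun i hi => if_neg (Finset.ne_of_mem_erase hi)),
      Finset.prod_const, Finset.card_erase_of_mem (Finset.mem_univ _), Finset.card_univ,
      Fintype.card_fin, mul_comm]
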